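/- If a bounded operator A on a Hilbert space H with orthogonal decomposition H = ⊕_{m≥0} F_m satisfies (i) A commutes with an operator L⁻ mapping F_m onto F_{m+1} for each m and (ii) A commutes with its adjoint L⁺ = (L⁻)* which maps F_{m+1} to F_m and annihilates F_0, then each subspace F_m is invariant under A. -/
import Mathlib


open scoped InnerProductSpace

/-- If a bounded operator A on a complex Hilbert space H with an orthogonal
decomposition H = ⊕_{m≥0} F_m commutes with an operator L⁻ mapping F_m onto F_{m+1}
and with its adjoint L⁺ (which maps F_{m+1} to F_m and annihilates F_0), then each
subspace F_m is invariant under A; equivalently ⟨A v_m, v_k⟩ = 0 whenever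
v_m ∈ F_m, v_k ∈ F_k with k ≠ m. -/
theorem invariant_subspaces_of_commuting_ladders
    {H : Type*} [NormedAddCommGroup H] [InnerProductSpace ℂ H] [CompleteSpace H]
    (F : ℕ → Submodule ℂ H)
    (horth : ∀ m k : ℕ, m ≠ k → ∀ u ∈ F m, ∀ v ∈ F k, ⟪u, v⟫_ℂ = 0)
    (hdense : (⨆ m, F m).topologicalClosure = ⊤)
    (A : H →L[ℂ] H)
    (Lm Lp : H →ₗ[ℂ] H)
    (honto : ∀ m : ℕ, (F m).map Lm = F (m + 1))
    (hdown : ∀ m : ℕ, (F (m + 1)).map Lp ≤ F m)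
    (hzero : ∀ v ∈ F 0, Lp v = 0)
    (hadj : ∀ u v : H, ⟪Lm u, v⟫_ℂ = ⟪u, Lp v⟫_ℂ)
    (hAm : ∀ v : H, A (Lm v) = Lm (A v))
    (hAp : ∀ v : H, A (Lp v) = Lp (A v)) :
    ∀ m k : ℕ, m ≠ k → ∀ vm ∈ F m, ∀ vk ∈ F k, ⟪A vm, vk⟫_ℂ = 0 := by
  -- iterates of Lp lower the grading
  have hLpIter : ∀ j m, ∀ v ∈ F m, (⇑Lp)^[j] v ∈ F (m - j) := by
    intro j
    induction j with
    | zero => intro m v hv; simpa using hv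
    | succ j ih =>
      intro m v hv
      rw [Function.iterate_succ_apply']
      have h1 : (⇑Lp)^[j] v ∈ F (m - j) := ih m v hv
      rcases Nat.eq_zero_or_pos (m - j) with h0 | hpos
      · rw [h0] at h1
        rw [hzero _ h1]
        exact (F _).zero_mem
      · obtain ⟨s, hs⟩ := Nat.exists_eq_succ_of_ne_zero hpos.ne'
        rw [hs] at h1
        have h2 : Lp ((⇑Lp)^[j] v) ∈ F s := hdown s (Submodule.mem_map_of_mem h1)
        have : m - (j + 1) = s := by omega
        rwa [this]
  -- iterates of Lp kill F 0
  have hLpZero : ∀ j, ∀ v ∈ F 0, (⇑Lp)^[j + 1] v = 0 := by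
    intro j v hv
    rw [Function.iterate_succ_apply, hzero _ hv]
    exact Function.iterate_fixed (map_zero Lp) j
  -- iterates of Lm are surjective onto higher levels
  have hLmSurj : ∀ j m, ∀ v ∈ F (m + j), ∃ w ∈ F m, (⇑Lm)^[j] w = v := by
    intro j
    induction j with
    | zero => intro m v hv; exact ⟨v, hv, rfl⟩
    | succ j ih =>
      intro m v hv
      have : v ∈ (F (m + j)).map Lm := by
        rw [honto (m + j)]
        exact hv
      obtain ⟨u, hu, huv⟩ := this
      obtain ⟨w, hw, hwu⟩ := ih m u hu
      exact ⟨w, hw, by rw [Function.iterate_succ_apply', hwu, huv]⟩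
  -- iterated adjoint relation
  have hadjIter : ∀ j (u v : H), ⟪(⇑Lm)^[j] u, v⟫_ℂ = ⟪u, (⇑Lp)^[j] v⟫_ℂ := by
    intro j
    induction j with
    | zero => intro u v; rfl
    | succ j ih =>
      intro u v
      rw [Function.iterate_succ_apply', hadj, ih u (Lp v), Function.iterate_succ_apply]
  -- conjugate form
  have hadjIter' : ∀ j (x w : H), ⟪x, (⇑Lm)^[j] w⟫_ℂ = ⟪(⇑Lp)^[j] x, w⟫_ℂ := by
    intro j x w
    rw [← inner_conj_symm, hadjIter, inner_conj_symm]
  -- A commutes with iterates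
  have hAmIter : ∀ j (v : H), A ((⇑Lm)^[j] v) = (⇑Lm)^[j] (A v) := by
    intro j
    induction j with
    | zero => intro v; rfl
    | succ j ih =>
      intro v
      rw [Function.iterate_succ_apply', hAm, ih, Function.iterate_succ_apply']
  have hApIter : ∀ j (v : H), A ((⇑Lp)^[j] v) = (⇑Lp)^[j] (A v) := by
    intro j
    induction j with
    | zero => intro v; rfl
    | succ j ih =>
      intro v
      rw [Function.iterate_succ_apply', hAp, ih, Function.iterate_succ_apply']
  -- main claim by strong induction on m + k
  suffices Hmain : ∀ n m k : ℕ, m + k = n → m ≠ k → ∀ vm ∈ F m, ∀ vk ∈ F k,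
      ⟪A vm, vk⟫_ℂ = 0 by
    intro m k hmk vm hvm vk hvk
    exact Hmain (m + k) m k rfl hmk vm hvm vk hvk
  intro n
  induction n using Nat.strong_induction_on with
  | _ n IH =>
    intro m k hn hmk vm hvm vk hvk
    rcases Nat.lt_or_ge k m with hkm | hmk'
    · -- k < m : write vm = Lm^[m-k] w with w ∈ F k
      obtain ⟨w, hw, hwv⟩ := hLmSurj (m - k) k vm (by
        have : k + (m - k) = m := by omega
        rwa [this])
      have key : ⟪A vm, vk⟫_ℂ = ⟪A w, (⇑Lp)^[m - k] vk⟫_ℂ := by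
        rw [← hwv, hAmIter, hadjIter]
      rcases Nat.eq_zero_or_pos k with hk0 | hkpos
      · rw [hk0] at hvk
        obtain ⟨j, hj⟩ : ∃ j, m - k = j + 1 := ⟨m - k - 1, by omega⟩
        rw [key, hj, hLpZero j vk hvk, inner_zero_right]
      · have hmem : (⇑Lp)^[m - k] vk ∈ F (k - (m - k)) := hLpIter (m - k) k vk hvk
        rw [key]
        exact IH (k + (k - (m - k))) (by omega) k (k - (m - k)) rfl (by omega)
          w hw _ hmem
    · -- m < k (since m ≠ k) : write vk = Lm^[k-m] w with w ∈ F m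
      have hmk2 : m < k := lt_of_le_of_ne hmk' hmk
      obtain ⟨w, hw, hwv⟩ := hLmSurj (k - m) m vk (by
        have : m + (k - m) = k := by omega
        rwa [this])
      have key : ⟪A vm, vk⟫_ℂ = ⟪A ((⇑Lp)^[k - m] vm), w⟫_ℂ := by
        rw [← hwv, hadjIter', ← hApIter]
      rcases Nat.eq_zero_or_pos m with hm0 | hmpos
      · rw [hm0] at hvm
        obtain ⟨j, hj⟩ : ∃ j, k - m = j + 1 := ⟨k - m - 1, by omega⟩
        rw [key, hj, hLpZero j vm hvm, map_zero, inner_zero_left]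
      · have hmem : (⇑Lp)^[k - m] vm ∈ F (m - (k - m)) := hLpIter (k - m) m vm hvm
        rw [key]
        exact IH ((m - (k - m)) + m) (by omega) (m - (k - m)) m rfl (by omega)
          _ hmem w hw
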